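/- Define the relative-prevalence lower density ρ⁻(S) = sup over compactly supported Borel probability measures μ of inf over v ∈ V of μ(S+v), and upper density ρ⁺(S) = inf over μ of sup over v of μ(S+v). Then for every Borel set S ⊆ V and all compactly supported Borel probability measures μ, ν: inf_v μ(S+v) ≤ inf_v (μ*ν)(S+v) ≤ sup_v (μ*ν)(S+v) ≤ sup_v ν(S+v); consequently 0 ≤ ρ⁻(S) ≤ ρ⁺(S) ≤ 1. -/

import Mathlib

open MeasureTheory Set

variable (V : Type*) [AddCommGroup V] [Module ℝ V] [MetricSpace V] [CompleteSpace V]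
  [IsTopologicalAddGroup V] [ContinuousSMul ℝ V] [MeasurableSpace V] [BorelSpace V]

/-- The class of compactly supported Borel probability measures on `V`. -/
def CPProb : Set (Measure V) :=
  {μ | IsProbabilityMeasure μ ∧ ∃ K : Set V, IsCompact K ∧ μ Kᶜ = 0}

variable {V}

/-- The convolution `μ*ν`, defined by `μ*ν(S) = (μ × ν){(x,y) : x + y ∈ S}`. -/
noncomputable def conv (μ ν : Measure V) : Measure V :=
  (μ.prod ν).map (fun p : V × V => p.1 + p.2)

set_option linter.unusedSectionVars false

lemma add_aemeasurable {μ ν : Measure V} [SFinite μ] [SFinite ν]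
    (hμ : μ ∈ CPProb V) (hν : ν ∈ CPProb V) :
    AEMeasurable (fun p : V × V => p.1 + p.2) (μ.prod ν) := by
  obtain ⟨-, K, hK, hKnull⟩ := hμ
  obtain ⟨-, L, hL, hLnull⟩ := hν
  have h1 : AEStronglyMeasurable (Prod.fst : V × V → V) (μ.prod ν) := by
    rw [aestronglyMeasurable_iff_aemeasurable_separable]
    refine ⟨measurable_fst.aemeasurable, K, hK.isSeparable, ?_⟩
    rw [ae_iff]
    have : {p : V × V | ¬ p.1 ∈ K} = Kᶜ ×ˢ (univ : Set V) := by ext p; simp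
    rw [this, Measure.prod_prod, hKnull, zero_mul]
  have h2 : AEStronglyMeasurable (Prod.snd : V × V → V) (μ.prod ν) := by
    rw [aestronglyMeasurable_iff_aemeasurable_separable]
    refine ⟨measurable_snd.aemeasurable, L, hL.isSeparable, ?_⟩
    rw [ae_iff]
    have : {p : V × V | ¬ p.2 ∈ L} = (univ : Set V) ×ˢ Lᶜ := by ext p; simp
    rw [this, Measure.prod_prod, hLnull, mul_zero]
  exact (continuous_add.comp_aestronglyMeasurable (h1.prodMk h2)).aemeasurable

lemma translate_preimage (S : Set V) (v y : V) :
    (fun x => x + y) ⁻¹' ((fun x => x + v) '' S) = (fun x => x + (v - y)) '' S := by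
  ext x
  simp only [mem_preimage, mem_image]
  constructor
  · rintro ⟨s, hs, h⟩
    exact ⟨s, hs, by rw [← add_sub_assoc, sub_eq_iff_eq_add]; exact h⟩
  · rintro ⟨s, hs, h⟩
    exact ⟨s, hs, by rw [← h]; abel⟩

lemma translate_meas {S : Set V} (hS : MeasurableSet S) (v : V) :
    MeasurableSet ((fun x => x + v) '' S) := by
  have : (fun x => x + v) '' S = (fun x => x + -v) ⁻¹' S := by
    ext x
    simp only [mem_image, mem_preimage]
    constructor
    · rintro ⟨s, hs, h⟩; rwa [← h, add_neg_cancel_right]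
    · intro h; exact ⟨x + -v, h, by abel⟩
  rw [this]
  exact hS.preimage (measurable_add_const _)

lemma conv_apply_right {μ ν : Measure V} [SFinite μ] [SFinite ν]
    (hμ : μ ∈ CPProb V) (hν : ν ∈ CPProb V) {T : Set V} (hT : MeasurableSet T) :
    conv μ ν T = ∫⁻ x, ν ((fun y => x + y) ⁻¹' T) ∂μ := by
  have hf := add_aemeasurable hμ hν
  set g := hf.mk _ with hg_def
  have hg : Measurable g := hf.measurable_mk
  have hfg : (fun p : V × V => p.1 + p.2) =ᵐ[μ.prod ν] g := hf.ae_eq_mk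
  rw [conv, Measure.map_congr hfg, Measure.map_apply hg hT, Measure.prod_apply (hg hT)]
  refine (lintegral_congr_ae ?_).symm
  filter_upwards [Measure.ae_ae_of_ae_prod hfg] with x hx
  refine measure_congr (Filter.eventuallyEq_set.2 ?_)
  filter_upwards [hx] with y hy
  simp only [mem_preimage, Set.preimage_preimage, hy, Prod.mk.injEq]

lemma conv_apply_left {μ ν : Measure V} [SFinite μ] [SFinite ν]
    (hμ : μ ∈ CPProb V) (hν : ν ∈ CPProb V) {T : Set V} (hT : MeasurableSet T) :
    conv μ ν T = ∫⁻ y, μ ((fun x => x + y) ⁻¹' T) ∂ν := by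
  have hf := add_aemeasurable hμ hν
  set g := hf.mk _ with hg_def
  have hg : Measurable g := hf.measurable_mk
  have hfg : (fun p : V × V => p.1 + p.2) =ᵐ[μ.prod ν] g := hf.ae_eq_mk
  have hswap : ∀ᵐ q ∂ν.prod μ, q.swap.1 + q.swap.2 = g q.swap :=
    ((Measure.measurePreserving_swap (μ := ν) (ν := μ)).quasiMeasurePreserving.ae hfg :)
  rw [conv, Measure.map_congr hfg, Measure.map_apply hg hT, Measure.prod_apply_symm (hg hT)]
  refine (lintegral_congr_ae ?_).symm
  filter_upwards [Measure.ae_ae_of_ae_prod hswap] with y hy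
  refine measure_congr (Filter.eventuallyEq_set.2 ?_)
  filter_upwards [hy] with x hx
  simp only [mem_preimage, Set.preimage_preimage]
  rw [show x + y = g (x, y) from hx]

variable (V)

/-- The relative-prevalence lower density of a set. -/
noncomputable def lowerDensity (S : Set V) : ENNReal :=
  ⨆ μ ∈ CPProb V, ⨅ v : V, μ ((fun x => x + v) '' S)

/-- The relative-prevalence upper density of a set. -/
noncomputable def upperDensity (S : Set V) : ENNReal :=
  ⨅ μ ∈ CPProb V, ⨆ v : V, μ ((fun x => x + v) '' S)

/-- For every Borel set `S` and all compactly supported Borel probability measures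
`μ, ν`: `inf_v μ(S+v) ≤ inf_v (μ*ν)(S+v) ≤ sup_v (μ*ν)(S+v) ≤ sup_v ν(S+v)`;
consequently `0 ≤ ρ⁻(S) ≤ ρ⁺(S) ≤ 1`. -/
theorem stmt_19 (S : Set V) (hS : MeasurableSet S) :
    (∀ μ ∈ CPProb V, ∀ ν ∈ CPProb V,
      (⨅ v : V, μ ((fun x => x + v) '' S)) ≤ (⨅ v : V, conv μ ν ((fun x => x + v) '' S)) ∧
      (⨅ v : V, conv μ ν ((fun x => x + v) '' S)) ≤ (⨆ v : V, conv μ ν ((fun x => x + v) '' S)) ∧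
      (⨆ v : V, conv μ ν ((fun x => x + v) '' S)) ≤ (⨆ v : V, ν ((fun x => x + v) '' S))) ∧
    0 ≤ lowerDensity V S ∧ lowerDensity V S ≤ upperDensity V S ∧ upperDensity V S ≤ 1 := by
  haveI : Nonempty V := ⟨0⟩
  have main : ∀ μ ∈ CPProb V, ∀ ν ∈ CPProb V,
      (⨅ v : V, μ ((fun x => x + v) '' S)) ≤ (⨅ v : V, conv μ ν ((fun x => x + v) '' S)) ∧
      (⨅ v : V, conv μ ν ((fun x => x + v) '' S)) ≤ (⨆ v : V, conv μ ν ((fun x => x + v) '' S)) ∧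
      (⨆ v : V, conv μ ν ((fun x => x + v) '' S)) ≤ (⨆ v : V, ν ((fun x => x + v) '' S)) := by
    intro μ hμ ν hν
    haveI := hμ.1; haveI := hν.1
    refine ⟨le_iInf fun v => ?_, (iInf_le _ 0).trans (le_iSup (fun v : V => conv μ ν ((fun x => x + v) '' S)) 0), iSup_le fun v => ?_⟩
    · calc (⨅ w : V, μ ((fun x => x + w) '' S))
          = ∫⁻ y, (⨅ w : V, μ ((fun x => x + w) '' S)) ∂ν := by
            rw [lintegral_const, measure_univ, mul_one]
        _ ≤ ∫⁻ y, μ ((fun x => x + (v - y)) '' S) ∂ν :=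
            lintegral_mono fun y => iInf_le _ _
        _ = conv μ ν ((fun x => x + v) '' S) := by
            rw [conv_apply_left hμ hν (translate_meas hS v)]
            congr 1; ext y; rw [translate_preimage]
    · calc conv μ ν ((fun x => x + v) '' S)
          = ∫⁻ x, ν ((fun y => x + y) ⁻¹' ((fun z => z + v) '' S)) ∂μ :=
            conv_apply_right hμ hν (translate_meas hS v)
        _ = ∫⁻ x, ν ((fun s => s + (v - x)) '' S) ∂μ := by
            congr 1; ext x
            rw [show (fun y => x + y) = (fun y => y + x) from funext fun y => add_comm x y,
              translate_preimage]
        _ ≤ ∫⁻ x, (⨆ w : V, ν ((fun s => s + w) '' S)) ∂μ :=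
            lintegral_mono fun x => le_iSup (fun w : V => ν ((fun s => s + w) '' S)) (v - x)
        _ = ⨆ w : V, ν ((fun s => s + w) '' S) := by
            rw [lintegral_const, measure_univ, mul_one]
  have hdirac : (Measure.dirac (0 : V)) ∈ CPProb V :=
    ⟨inferInstance, {0}, isCompact_singleton, by
      rw [Measure.dirac_apply' _ (measurableSet_singleton 0).compl]
      simp⟩
  refine ⟨main, zero_le, ?_, ?_⟩
  · refine iSup₂_le fun μ hμ => le_iInf₂ fun ν hν => ?_
    haveI := hμ.1; haveI := hν.1
    obtain ⟨h1, h2, h3⟩ := main μ hμ ν hν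
    exact h1.trans (h2.trans h3)
  · refine iInf₂_le_of_le _ hdirac (iSup_le fun v => ?_)
    exact prob_le_one
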